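/- Let K ≥ 2 and M ≥ K+1. Let F ∈ 𝓕_K^an be such that there exist δ > 0 and a row index i with δ ≤ F_{ik} ≤ 1−δ for all k ∈ {1,…,K}, and let Q ∈ 𝓠_K have linearly dependent rows (i.e. Q ∉ 𝓠_K^in). Then there exists F² ∈ 𝓕_K^an such that FQ = F²Q but (F,Q) is not equivalent to (F²,Q). -/

import Mathlib

open Matrix BigOperators

/-- `F ∈ 𝓕_K`: real `M × K` matrix with entries in `[0,1]`. -/
def memF {M K : ℕ} (F : Matrix (Fin M) (Fin K) ℝ) : Prop :=
  ∀ s k, 0 ≤ F s k ∧ F s k ≤ 1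

/-- `Q ∈ 𝓠_K`: real `K × N` matrix with nonnegative entries whose columns sum to 1. -/
def memQ {K N : ℕ} (Q : Matrix (Fin K) (Fin N) ℝ) : Prop :=
  (∀ k i, 0 ≤ Q k i) ∧ ∀ i, ∑ k, Q k i = 1

/-- The standard basis vector `e_k` occurs as a column of `Q`. -/
def isColE {K N : ℕ} (Q : Matrix (Fin K) (Fin N) ℝ) (k : Fin K) : Prop :=
  ∃ i, ∀ l, Q l i = if l = k then (1 : ℝ) else 0

/-- `Q ∈ 𝓠_K^an`: anchor condition on `Q`. -/
def memQan {K N : ℕ} (Q : Matrix (Fin K) (Fin N) ℝ) : Prop :=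
  memQ Q ∧ ∀ k, isColE Q k

/-- The `K-1` column differences `F_{⋆1}−F_{⋆K}, …, F_{⋆(K−1)}−F_{⋆K}` are
linearly independent (stated for every proof of `0 < K`). -/
def colDiffIndep {M K : ℕ} (F : Matrix (Fin M) (Fin K) ℝ) : Prop :=
  ∀ hK : 0 < K, LinearIndependent ℝ (fun j : Fin (K - 1) =>
    (fun s => F s (Fin.castLE (Nat.sub_le K 1) j) - F s ⟨K - 1, Nat.sub_lt hK Nat.one_pos⟩ :
      Fin M → ℝ))

/-- `F ∈ 𝓕_K^in`. -/
def memFin {M K : ℕ} (F : Matrix (Fin M) (Fin K) ℝ) : Prop :=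
  memF F ∧ colDiffIndep F

/-- `F ∈ 𝓕_K^an`: anchor condition on `F`. -/
def memFan {M K : ℕ} (F : Matrix (Fin M) (Fin K) ℝ) : Prop :=
  memF F ∧ ∀ k, ∃ s, 0 < F s k ∧ ∀ l, l ≠ k → F s l = 0

/-- `Q ∈ 𝓠_K^in`: the rows of `Q` are linearly independent. -/
def memQin {K N : ℕ} (Q : Matrix (Fin K) (Fin N) ℝ) : Prop :=
  memQ Q ∧ LinearIndependent ℝ (fun k : Fin K => Q k)

/-- `F ∈ 𝓕_K^d`: the columns of `F` are mutually distinct. -/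
def memFd {M K : ℕ} (F : Matrix (Fin M) (Fin K) ℝ) : Prop :=
  memF F ∧ ∀ k l : Fin K, (∀ s, F s k = F s l) → k = l

/-- `Q ∈ 𝓠_K^ua`: every column of `Q` is a standard basis vector, and every
standard basis vector occurs as a column. -/
def memQua {K N : ℕ} (Q : Matrix (Fin K) (Fin N) ℝ) : Prop :=
  memQ Q ∧ (∀ i, ∃ k, ∀ l, Q l i = if l = k then (1 : ℝ) else 0) ∧ ∀ k, isColE Q k

/-- `(F¹,Q¹) ∼ (F²,Q²)`: there is a bijection (permutation) `π` with
`F²_{⋆k} = F¹_{⋆π(k)}` and `Q²_{k⋆} = Q¹_{π(k)⋆}` for every `k`. -/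
def MEquiv {M N K₁ K₂ : ℕ} (F1 : Matrix (Fin M) (Fin K₁) ℝ) (Q1 : Matrix (Fin K₁) (Fin N) ℝ)
    (F2 : Matrix (Fin M) (Fin K₂) ℝ) (Q2 : Matrix (Fin K₂) (Fin N) ℝ) : Prop :=
  ∃ π : Fin K₂ → Fin K₁, Function.Bijective π ∧
    (∀ k s, F2 s k = F1 s (π k)) ∧ (∀ k i, Q2 k i = Q1 (π k) i)

/-- `co(F)`: convex hull of the columns of `F` in `ℝ^M`. -/
def coCols {M K : ℕ} (F : Matrix (Fin M) (Fin K) ℝ) : Set (Fin M → ℝ) :=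
  convexHull ℝ {v | ∃ k, v = fun s => F s k}

/-- `cone(Q)`: all nonnegative linear combinations of the rows of `Q` in `ℝ^N`. -/
def coneRows {K N : ℕ} (Q : Matrix (Fin K) (Fin N) ℝ) : Set (Fin N → ℝ) :=
  {x | ∃ c : Fin K → ℝ, (∀ k, 0 ≤ c k) ∧ x = ∑ k, c k • Q k}

/-- A model is identifiable if equality of the products implies equivalence. -/
def Identifiable {M N : ℕ}
    (𝓜 : ∀ K : ℕ, Set (Matrix (Fin M) (Fin K) ℝ × Matrix (Fin K) (Fin N) ℝ)) : Prop :=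
  ∀ (K₁ K₂ : ℕ) (F1 : Matrix (Fin M) (Fin K₁) ℝ) (Q1 : Matrix (Fin K₁) (Fin N) ℝ)
    (F2 : Matrix (Fin M) (Fin K₂) ℝ) (Q2 : Matrix (Fin K₂) (Fin N) ℝ),
    (F1, Q1) ∈ 𝓜 K₁ → (F2, Q2) ∈ 𝓜 K₂ → F1 * Q1 = F2 * Q2 → MEquiv F1 Q1 F2 Q2

/-- The set of indices `k` such that some row of `F` equals `δ_k · e_kᵀ` with `δ_k > 0`. -/
def anchorRows {M K : ℕ} (F : Matrix (Fin M) (Fin K) ℝ) : Set (Fin K) :=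
  {k | ∃ (s : Fin M) (d : ℝ), 0 < d ∧ ∀ l, F s l = if l = k then d else 0}

/-- if `F ∈ 𝓕_K^an` has a row `i` with entries in `[δ, 1−δ]` and the rows
of `Q ∈ 𝓠_K` are linearly dependent, there is `F² ∈ 𝓕_K^an` with `FQ = F²Q` but
`(F,Q) ≁ (F²,Q)`. -/
theorem stmt4 {M N K : ℕ} (hN : 1 ≤ N) (hK : 2 ≤ K) (hM : K + 1 ≤ M)
    (F : Matrix (Fin M) (Fin K) ℝ) (hF : memFan F)
    (δ : ℝ) (hδ : 0 < δ) (i : Fin M) (hrow : ∀ k, δ ≤ F i k ∧ F i k ≤ 1 - δ)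
    (Q : Matrix (Fin K) (Fin N) ℝ) (hQ : memQ Q)
    (hQdep : ¬ LinearIndependent ℝ (fun k : Fin K => Q k)) :
    ∃ F2 : Matrix (Fin M) (Fin K) ℝ, memFan F2 ∧ F * Q = F2 * Q ∧ ¬ MEquiv F Q F2 Q := by
  obtain ⟨c, hcsum, k₀, hk₀⟩ := Fintype.not_linearIndependent_iff.mp hQdep
  set S : ℝ := ∑ k, |c k| with hSdef
  have hcS : ∀ k, |c k| ≤ S := by
    intro k
    exact Finset.single_le_sum (fun l _ => abs_nonneg (c l)) (Finset.mem_univ k)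
  have hS : 0 < S := lt_of_lt_of_le (abs_pos.mpr hk₀) (hcS k₀)
  set B : Finset ℝ :=
    Finset.image (fun π : Fin K → Fin K => (F i (π k₀) - F i k₀) / c k₀) Finset.univ with hB
  have hIoo : (Set.Ioo (0:ℝ) (δ / S)).Infinite := Set.Ioo_infinite (by positivity)
  obtain ⟨ε, hεmem, hεB⟩ := hIoo.exists_notMem_finset B
  obtain ⟨hε0, hεlt⟩ := hεmem
  have hεS : ∀ k, ε * |c k| < δ := by
    intro k
    calc ε * |c k| ≤ ε * S := by
          exact mul_le_mul_of_nonneg_left (hcS k) hε0.le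
      _ < (δ / S) * S := by exact mul_lt_mul_of_pos_right hεlt hS
      _ = δ := by field_simp
  set F2 : Matrix (Fin M) (Fin K) ℝ :=
    fun s k => if s = i then F i k + ε * c k else F s k with hF2def
  have hrowi_notanchor : ∀ k (s : Fin M), 0 < F s k → (∀ l, l ≠ k → F s l = 0) → s ≠ i := by
    intro k s _ hzero hsi
    -- row i has all entries ≥ δ > 0, but anchor row has K-1 ≥ 1 zero entries
    obtain ⟨l, hl⟩ : ∃ l : Fin K, l ≠ k := by
      haveI : Nontrivial (Fin K) := ⟨⟨⟨0, by omega⟩, ⟨1, by omega⟩, by simp [Fin.ext_iff]⟩⟩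
      exact exists_ne k
    have := hzero l hl
    rw [hsi] at this
    have := (hrow l).1
    linarith
  refine ⟨F2, ⟨?_, ?_⟩, ?_, ?_⟩
  · -- memF F2
    intro s k
    by_cases hs : s = i
    · simp only [hF2def, hs, if_pos rfl]
      have h1 := (hrow k).1
      have h2 := (hrow k).2
      have h3 := hεS k
      have h4 : -(ε * |c k|) ≤ ε * c k := by
        have := neg_abs_le (c k)
        nlinarith
      have h5 : ε * c k ≤ ε * |c k| := by
        have := le_abs_self (c k)
        nlinarith
      constructor <;> nlinarith
    · simp only [hF2def, if_neg hs]
      exact hF.1 s k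
  · -- anchor
    intro k
    obtain ⟨s, hs1, hs2⟩ := hF.2 k
    have hsi : s ≠ i := hrowi_notanchor k s hs1 hs2
    refine ⟨s, ?_, ?_⟩
    · simpa [hF2def, if_neg hsi] using hs1
    · intro l hl
      simpa [hF2def, if_neg hsi] using hs2 l hl
  · -- F * Q = F2 * Q
    ext s j
    simp only [Matrix.mul_apply]
    simp only [hF2def]
    by_cases hs : s = i
    · rw [hs]
      simp only [if_pos rfl, if_true]
      have hzero : ∑ k, c k * Q k j = 0 := by
        have := congrFun hcsum j
        simpa [Finset.sum_apply] using this
      rw [Finset.sum_congr rfl (fun k _ => by ring_nf :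
        ∀ k ∈ Finset.univ, (F i k + ε * c k) * Q k j = F i k * Q k j + ε * (c k * Q k j))]
      rw [Finset.sum_add_distrib, ← Finset.mul_sum, hzero, mul_zero, add_zero]
    · simp only [if_neg hs]
  · -- not equivalent
    rintro ⟨π, hπbij, hFeq, hQeq⟩
    have h := hFeq k₀ i
    simp only [hF2def, if_pos rfl] at h
    have : ε = (F i (π k₀) - F i k₀) / c k₀ := by
      field_simp
      linarith
    exact hεB (by
      rw [this, hB]
      exact Finset.mem_image.mpr ⟨π, Finset.mem_univ π, rfl⟩)
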